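/- Let h > 0, c_v > 0, α > 1, β ≥ 0, t₀ > 0, and suppose v_k : ℝ → ℂ satisfy sup_t |v_k(t)| ≤ c_v e^{-β|k|}/⟨k⟩^α for all k ∈ ℤ, with v_0 ≡ 0. Fix k₀ ∈ ℤ and define A₁(t) = ∫₀ᵗ ∑_{j≠±k₀} v_{k₀-j}(τ) v_{j-k₀}(τ)/(k₀² - j²) dτ. Then for |t| ≤ t₀, |A₁(t)| ≤ |t| c_v² c₀ / ⟨k₀⟩² for an absolute constant c₀. -/

import Mathlib

/-- ⟨k⟩ = |k| + 1 -/
noncomputable def br (k : ℤ) : ℝ := |(k : ℝ)| + 1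

open Real

noncomputable def uu (l : ℤ) : ℝ := 1 / (|(l : ℝ)| + 1) ^ 2
noncomputable def qq (m : ℤ) : ℝ := 1 / (m : ℝ) ^ 2

lemma one_le_br (k : ℤ) : 1 ≤ br k := by
  unfold br; have := abs_nonneg ((k : ℝ)); linarith

lemma br_pos (k : ℤ) : 0 < br k := lt_of_lt_of_le one_pos (one_le_br k)

lemma br_neg (k : ℤ) : br (-k) = br k := by
  unfold br; push_cast; rw [abs_neg]

lemma uu_nonneg (l : ℤ) : 0 ≤ uu l := by unfold uu; positivity

lemma qq_nonneg (m : ℤ) : 0 ≤ qq m := by unfold qq; positivity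

lemma qq_summable : Summable qq :=
  summable_one_div_int_pow.mpr one_lt_two

lemma qq_hasSum : HasSum qq (π ^ 2 / 6 + π ^ 2 / 6) := by
  have h1 : HasSum (fun n : ℕ => (1 : ℝ) / (n : ℝ) ^ 2) (π ^ 2 / 6) := hasSum_zeta_two
  have h2 : HasSum (fun n : ℕ => qq (n : ℤ)) (π ^ 2 / 6) := by
    refine h1.congr_fun fun n => ?_
    unfold qq; push_cast; ring
  have h3 : HasSum (fun n : ℕ => qq (-(n + 1) : ℤ)) (π ^ 2 / 6) := by
    have := (hasSum_nat_add_iff' (f := fun n : ℕ => (1 : ℝ) / (n : ℝ) ^ 2) 1).mpr h1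
    simp only [Finset.range_one, Finset.sum_singleton, Nat.cast_zero] at this
    norm_num at this
    refine this.congr_fun fun n => ?_
    unfold qq; push_cast; ring
  exact h2.of_nat_of_neg_add_one h3

lemma qq_tsum_le : ∑' m, qq m ≤ 6 := by
  rw [qq_hasSum.tsum_eq]
  nlinarith [Real.pi_le_four, Real.pi_pos]

lemma uu_le_qq {l : ℤ} (hl : l ≠ 0) : uu l ≤ qq l := by
  unfold uu qq
  have h0 : (0 : ℝ) < |(l : ℝ)| := by
    simp only [abs_pos, Int.cast_ne_zero]; exact hl
  have h1 : (l : ℝ) ^ 2 ≤ (|(l : ℝ)| + 1) ^ 2 := by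
    nlinarith [sq_abs (l : ℝ)]
  exact one_div_le_one_div_of_le (by positivity) h1

lemma uu_summable : Summable uu := by
  refine Summable.of_norm_bounded_eventually qq_summable ?_
  filter_upwards [Filter.eventually_cofinite_ne (0 : ℤ)] with l hl
  rw [Real.norm_eq_abs, abs_of_nonneg (uu_nonneg l)]
  exact uu_le_qq hl

lemma uu_tsum_le : ∑' l, uu l ≤ 7 := by
  rw [Summable.tsum_eq_add_tsum_ite uu_summable 0]
  have h0 : uu 0 = 1 := by unfold uu; norm_num
  have hs : Summable fun l : ℤ => ite (l = 0) 0 (uu l) := by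
    refine Summable.of_norm_bounded uu_summable fun l => ?_
    by_cases h : l = 0
    · simp only [h, if_true, norm_zero]; exact uu_nonneg 0
    · simp only [h, if_false, Real.norm_eq_abs, abs_of_nonneg (uu_nonneg l), le_refl]
  have hle : ∑' l, ite (l = 0) 0 (uu l) ≤ ∑' m, qq m := by
    refine Summable.tsum_le_tsum (fun l => ?_) hs qq_summable
    by_cases h : l = 0
    · simp [h, qq_nonneg]
    · simp only [h, if_false]; exact uu_le_qq h
  linarith [qq_tsum_le]

/-- The summand. -/
noncomputable def fA (a : ℤ → ℂ) (k₀ j : ℤ) : ℂ :=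
  if j ≠ k₀ ∧ j ≠ -k₀ then a (k₀ - j) * a (j - k₀) / ((k₀ ^ 2 - j ^ 2 : ℤ) : ℂ) else 0

lemma prod_norm_le {cv : ℝ} (hcv : 0 ≤ cv) {a : ℤ → ℂ}
    (hbd : ∀ m, ‖a m‖ ≤ cv / br m) (l : ℤ) :
    ‖a (-l)‖ * ‖a l‖ ≤ cv ^ 2 * uu l := by
  have h1 : ‖a (-l)‖ * ‖a l‖ ≤ (cv / br (-l)) * (cv / br l) :=
    mul_le_mul (hbd _) (hbd _) (norm_nonneg _) (div_nonneg hcv (br_pos _).le)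
  have h2 : (cv / br (-l)) * (cv / br l) = cv ^ 2 * uu l := by
    rw [br_neg]
    unfold uu br
    field_simp
  linarith

lemma fA_norm_le {cv : ℝ} (hcv : 0 ≤ cv) (k₀ : ℤ) {a : ℤ → ℂ}
    (hbd : ∀ m, ‖a m‖ ≤ cv / br m) (j : ℤ) :
    ‖fA a k₀ j‖ ≤ cv ^ 2 * uu (j - k₀) := by
  unfold fA
  by_cases hc : j ≠ k₀ ∧ j ≠ -k₀
  · rw [if_pos hc]
    have hden : (1 : ℝ) ≤ ‖((k₀ ^ 2 - j ^ 2 : ℤ) : ℂ)‖ := by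
      rw [Complex.norm_intCast]
      have hne : (k₀ ^ 2 - j ^ 2 : ℤ) ≠ 0 := by
        have : (k₀ ^ 2 - j ^ 2 : ℤ) = (k₀ - j) * (k₀ + j) := by ring
        rw [this]
        exact mul_ne_zero (sub_ne_zero.mpr fun h => hc.1 h.symm)
          (fun h => hc.2 (by omega))
      have := Int.one_le_abs hne
      rw [← Int.cast_abs]
      exact_mod_cast this
    rw [norm_div, norm_mul]
    have h1 : ‖a (k₀ - j)‖ * ‖a (j - k₀)‖ ≤ cv ^ 2 * uu (j - k₀) := by
      have : k₀ - j = -(j - k₀) := by ring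
      rw [this]
      exact prod_norm_le hcv hbd (j - k₀)
    calc ‖a (k₀ - j)‖ * ‖a (j - k₀)‖ / ‖((k₀ ^ 2 - j ^ 2 : ℤ) : ℂ)‖
        ≤ ‖a (k₀ - j)‖ * ‖a (j - k₀)‖ :=
          div_le_self (by positivity) hden
      _ ≤ cv ^ 2 * uu (j - k₀) := h1
  · rw [if_neg hc]
    simp only [norm_zero]
    exact mul_nonneg (by positivity) (uu_nonneg _)


lemma uu_neg (l : ℤ) : uu (-l) = uu l := by
  unfold uu; push_cast; rw [abs_neg]

lemma pair_bound {cv : ℝ} (hcv : 0 ≤ cv) {k₀ : ℤ} (hk : k₀ ≠ 0) {a : ℤ → ℂ}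
    (hbd : ∀ m, ‖a m‖ ≤ cv / br m) (l : ℤ) :
    ‖fA a k₀ (k₀ + l) + fA a k₀ (k₀ - l)‖ ≤
      cv ^ 2 / (k₀ : ℝ) ^ 2 * (3 * uu l + qq (l - 2 * k₀) + qq (l + 2 * k₀)) := by
  have hKne : ((k₀ : ℝ)) ≠ 0 := Int.cast_ne_zero.mpr hk
  have hK : (0 : ℝ) < (k₀ : ℝ) ^ 2 := by positivity
  have hu := uu_nonneg l
  have hq1 := qq_nonneg (l - 2 * k₀)
  have hq2 := qq_nonneg (l + 2 * k₀)
  by_cases hl0 : l = 0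
  · subst hl0
    have h1 : fA a k₀ (k₀ + 0) = 0 := by
      unfold fA; rw [if_neg]; push_neg; intro h; omega
    have h2 : fA a k₀ (k₀ - 0) = 0 := by
      unfold fA; rw [if_neg]; push_neg; intro h; omega
    rw [h1, h2, add_zero, norm_zero]
    positivity
  by_cases hl2 : l = 2 * k₀
  · subst hl2
    have e1 : k₀ - (k₀ + 2 * k₀) = -(2 * k₀) := by ring
    have e2 : k₀ + 2 * k₀ - k₀ = 2 * k₀ := by ring
    have e3 : (k₀ ^ 2 - (k₀ + 2 * k₀) ^ 2 : ℤ) = -(8 * k₀ ^ 2) := by ring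
    unfold fA
    rw [if_pos ⟨by omega, by omega⟩,
      if_neg (by omega : ¬(k₀ - 2 * k₀ ≠ k₀ ∧ k₀ - 2 * k₀ ≠ -k₀)), add_zero, e1, e2, e3]
    rw [norm_div, norm_mul, Complex.norm_intCast]
    have hE : |((-(8 * k₀ ^ 2) : ℤ) : ℝ)| = 8 * (k₀ : ℝ) ^ 2 := by
      push_cast; rw [abs_neg, abs_of_nonneg (by positivity)]
    rw [hE]
    have hX : ‖a (-(2 * k₀))‖ * ‖a (2 * k₀)‖ ≤ cv ^ 2 * uu (2 * k₀) :=
      prod_norm_le hcv hbd (2 * k₀)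
    calc ‖a (-(2 * k₀))‖ * ‖a (2 * k₀)‖ / (8 * (k₀ : ℝ) ^ 2)
        ≤ cv ^ 2 * uu (2 * k₀) / (8 * (k₀ : ℝ) ^ 2) :=
          div_le_div₀ (mul_nonneg (by positivity) (uu_nonneg _)) hX (by positivity) le_rfl
      _ ≤ cv ^ 2 * uu (2 * k₀) / (k₀ : ℝ) ^ 2 :=
          div_le_div_of_nonneg_left (mul_nonneg (by positivity) (uu_nonneg _)) hK (by linarith)
      _ = cv ^ 2 / (k₀ : ℝ) ^ 2 * uu (2 * k₀) := by ring
      _ ≤ _ := by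
          apply mul_le_mul_of_nonneg_left _ (by positivity)
          linarith
  by_cases hl3 : l = -(2 * k₀)
  · subst hl3
    have e1 : k₀ - (k₀ - -(2 * k₀)) = -(2 * k₀) := by ring
    have e2 : k₀ - -(2 * k₀) - k₀ = 2 * k₀ := by ring
    have e3 : (k₀ ^ 2 - (k₀ - -(2 * k₀)) ^ 2 : ℤ) = -(8 * k₀ ^ 2) := by ring
    unfold fA
    rw [if_neg (by omega : ¬(k₀ + -(2 * k₀) ≠ k₀ ∧ k₀ + -(2 * k₀) ≠ -k₀)),
      if_pos ⟨by omega, by omega⟩, zero_add, e1, e2, e3]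
    rw [norm_div, norm_mul, Complex.norm_intCast]
    have hE : |((-(8 * k₀ ^ 2) : ℤ) : ℝ)| = 8 * (k₀ : ℝ) ^ 2 := by
      push_cast; rw [abs_neg, abs_of_nonneg (by positivity)]
    rw [hE]
    have hX : ‖a (-(2 * k₀))‖ * ‖a (2 * k₀)‖ ≤ cv ^ 2 * uu (2 * k₀) :=
      prod_norm_le hcv hbd (2 * k₀)
    have huu : uu (2 * k₀) = uu (-(2 * k₀)) := (uu_neg (2 * k₀)).symm
    calc ‖a (-(2 * k₀))‖ * ‖a (2 * k₀)‖ / (8 * (k₀ : ℝ) ^ 2)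
        ≤ cv ^ 2 * uu (2 * k₀) / (8 * (k₀ : ℝ) ^ 2) :=
          div_le_div₀ (mul_nonneg (by positivity) (uu_nonneg _)) hX (by positivity) le_rfl
      _ ≤ cv ^ 2 * uu (2 * k₀) / (k₀ : ℝ) ^ 2 :=
          div_le_div_of_nonneg_left (mul_nonneg (by positivity) (uu_nonneg _)) hK (by linarith)
      _ = cv ^ 2 / (k₀ : ℝ) ^ 2 * uu (-(2 * k₀)) := by rw [← huu]; ring
      _ ≤ _ := by
          apply mul_le_mul_of_nonneg_left _ (by positivity)
          linarith
  -- generic case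
  · have e1 : k₀ - (k₀ + l) = -l := by ring
    have e2 : k₀ + l - k₀ = l := by ring
    have e3 : k₀ - (k₀ - l) = l := by ring
    have e4 : k₀ - l - k₀ = -l := by ring
    unfold fA
    rw [if_pos ⟨by omega, by omega⟩, if_pos ⟨by omega, by omega⟩, e1, e2, e3, e4]
    set X : ℂ := a (-l) * a l with hXdef
    have hmc : a l * a (-l) = X := mul_comm _ _
    rw [hmc]
    -- integer nonvanishing
    have n₁ : (k₀ ^ 2 - (k₀ + l) ^ 2 : ℤ) ≠ 0 := by
      have h : (k₀ ^ 2 - (k₀ + l) ^ 2 : ℤ) = -(l * (2 * k₀ + l)) := by ring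
      rw [h]
      exact neg_ne_zero.mpr (mul_ne_zero hl0 (by omega))
    have n₂ : (k₀ ^ 2 - (k₀ - l) ^ 2 : ℤ) ≠ 0 := by
      have h : (k₀ ^ 2 - (k₀ - l) ^ 2 : ℤ) = l * (2 * k₀ - l) := by ring
      rw [h]
      exact mul_ne_zero hl0 (by omega)
    have n₃ : (4 * k₀ ^ 2 - l ^ 2 : ℤ) ≠ 0 := by
      have h : (4 * k₀ ^ 2 - l ^ 2 : ℤ) = (2 * k₀ - l) * (2 * k₀ + l) := by ring
      rw [h]
      exact mul_ne_zero (by omega) (by omega)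
    have hid : X / ((k₀ ^ 2 - (k₀ + l) ^ 2 : ℤ) : ℂ) + X / ((k₀ ^ 2 - (k₀ - l) ^ 2 : ℤ) : ℂ)
        = X * 2 / ((4 * k₀ ^ 2 - l ^ 2 : ℤ) : ℂ) := by
      have c₁ : ((k₀ ^ 2 - (k₀ + l) ^ 2 : ℤ) : ℂ) = (k₀ : ℂ) ^ 2 - ((k₀ : ℂ) + (l : ℂ)) ^ 2 := by
        push_cast; ring
      have c₂ : ((k₀ ^ 2 - (k₀ - l) ^ 2 : ℤ) : ℂ) = (k₀ : ℂ) ^ 2 - ((k₀ : ℂ) - (l : ℂ)) ^ 2 := by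
        push_cast; ring
      have c₃ : ((4 * k₀ ^ 2 - l ^ 2 : ℤ) : ℂ) = 4 * (k₀ : ℂ) ^ 2 - (l : ℂ) ^ 2 := by
        push_cast; ring
      have z₁ : ((k₀ : ℂ) ^ 2 - ((k₀ : ℂ) + (l : ℂ)) ^ 2) ≠ 0 := by
        rw [← c₁]; exact_mod_cast Int.cast_ne_zero.mpr n₁
      have z₂ : ((k₀ : ℂ) ^ 2 - ((k₀ : ℂ) - (l : ℂ)) ^ 2) ≠ 0 := by
        rw [← c₂]; exact_mod_cast Int.cast_ne_zero.mpr n₂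
      have z₃ : (4 * (k₀ : ℂ) ^ 2 - (l : ℂ) ^ 2) ≠ 0 := by
        rw [← c₃]; exact_mod_cast Int.cast_ne_zero.mpr n₃
      rw [c₁, c₂, c₃]
      rw [div_add_div _ _ z₁ z₂, div_eq_div_iff (mul_ne_zero z₁ z₂) z₃]
      ring
    rw [hid, norm_div, norm_mul, Complex.norm_intCast]
    have hX : ‖X‖ ≤ cv ^ 2 * uu l := by
      rw [hXdef, norm_mul]; exact prod_norm_le hcv hbd l
    have h2n : ‖(2 : ℂ)‖ = 2 := by norm_num
    rw [h2n]
    set E : ℝ := |((4 * k₀ ^ 2 - l ^ 2 : ℤ) : ℝ)| with hEdef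
    have hEpos : 0 < E := by
      rw [hEdef, abs_pos]
      exact_mod_cast Int.cast_ne_zero.mpr n₃
    rcases le_total (l ^ 2) (k₀ ^ 2) with hc | hc
    · -- small l: E ≥ 3 k₀²
      have hE3 : 3 * (k₀ : ℝ) ^ 2 ≤ E := by
        have hi : (3 * k₀ ^ 2 : ℤ) ≤ 4 * k₀ ^ 2 - l ^ 2 := by linarith
        have : ((3 * k₀ ^ 2 : ℤ) : ℝ) ≤ ((4 * k₀ ^ 2 - l ^ 2 : ℤ) : ℝ) := by exact_mod_cast hi
        calc (3 : ℝ) * (k₀ : ℝ) ^ 2 = ((3 * k₀ ^ 2 : ℤ) : ℝ) := by push_cast; ring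
          _ ≤ ((4 * k₀ ^ 2 - l ^ 2 : ℤ) : ℝ) := this
          _ ≤ E := le_abs_self _
      calc ‖X‖ * 2 / E ≤ cv ^ 2 * uu l * 2 / (3 * (k₀ : ℝ) ^ 2) :=
            div_le_div₀ (by positivity) (by linarith) (by positivity) hE3
        _ = cv ^ 2 / (k₀ : ℝ) ^ 2 * (2 / 3 * uu l) := by field_simp
        _ ≤ _ := by
            apply mul_le_mul_of_nonneg_left _ (by positivity)
            linarith
    · -- large l
      have habs : (k₀ : ℝ) ^ 2 ≤ (l : ℝ) ^ 2 := by exact_mod_cast hc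
      have hul : uu l ≤ 1 / (k₀ : ℝ) ^ 2 := by
        unfold uu
        apply one_div_le_one_div_of_le hK
        nlinarith [sq_abs (l : ℝ), abs_nonneg (l : ℝ)]
      have hfact : E = |((l - 2 * k₀ : ℤ) : ℝ)| * |((l + 2 * k₀ : ℤ) : ℝ)| := by
        have hcst : ((4 * k₀ ^ 2 - l ^ 2 : ℤ) : ℝ)
            = -(((l - 2 * k₀ : ℤ) : ℝ) * ((l + 2 * k₀ : ℤ) : ℝ)) := by push_cast; ring
        rw [hEdef, hcst, abs_neg, abs_mul]
      set x : ℝ := |((l - 2 * k₀ : ℤ) : ℝ)| with hxdef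
      set y : ℝ := |((l + 2 * k₀ : ℤ) : ℝ)| with hydef
      have hx : 0 < x := by
        rw [hxdef, abs_pos]; exact_mod_cast Int.cast_ne_zero.mpr (by omega : (l - 2*k₀ : ℤ) ≠ 0)
      have hy : 0 < y := by
        rw [hydef, abs_pos]; exact_mod_cast Int.cast_ne_zero.mpr (by omega : (l + 2*k₀ : ℤ) ≠ 0)
      have hamgm : 2 / (x * y) ≤ 1 / x ^ 2 + 1 / y ^ 2 := by
        have hexp : (1 / x - 1 / y) ^ 2 = 1 / x ^ 2 - 2 / (x * y) + 1 / y ^ 2 := by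
          field_simp; ring
        nlinarith [sq_nonneg (1 / x - 1 / y)]
      have hq1v : qq (l - 2 * k₀) = 1 / x ^ 2 := by
        rw [hxdef]; unfold qq; rw [sq_abs]
      have hq2v : qq (l + 2 * k₀) = 1 / y ^ 2 := by
        rw [hydef]; unfold qq; rw [sq_abs]
      calc ‖X‖ * 2 / E = ‖X‖ * (2 / E) := by ring
        _ ≤ (cv ^ 2 * (1 / (k₀ : ℝ) ^ 2)) * (qq (l - 2 * k₀) + qq (l + 2 * k₀)) := by
            apply mul_le_mul
            · exact hX.trans (mul_le_mul_of_nonneg_left hul (by positivity))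
            · rw [hfact, hq1v, hq2v]; exact hamgm
            · positivity
            · positivity
        _ = cv ^ 2 / (k₀ : ℝ) ^ 2 * (qq (l - 2 * k₀) + qq (l + 2 * k₀)) := by ring
        _ ≤ _ := by
            apply mul_le_mul_of_nonneg_left _ (by positivity)
            linarith


lemma key {cv : ℝ} (hcv : 0 ≤ cv) (k₀ : ℤ) {a : ℤ → ℂ}
    (hbd : ∀ m, ‖a m‖ ≤ cv / br m) :
    ‖∑' j : ℤ, fA a k₀ j‖ ≤ cv ^ 2 * 100 / br k₀ ^ 2 := by
  have hshift : Summable fun j : ℤ => cv ^ 2 * uu (j - k₀) := by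
    apply Summable.mul_left
    have := (Equiv.subRight k₀).summable_iff (f := uu)
    simp only [Function.comp_def, Equiv.subRight_apply] at this
    exact this.mpr uu_summable
  have hfs : Summable (fA a k₀) :=
    Summable.of_norm_bounded hshift (fA_norm_le hcv k₀ hbd)
  have hfns : Summable fun j : ℤ => ‖fA a k₀ j‖ := by
    refine Summable.of_norm_bounded hshift fun j => ?_
    rw [norm_norm]; exact fA_norm_le hcv k₀ hbd j
  by_cases hk : k₀ = 0
  · subst hk
    have hptw : ∀ j : ℤ, ‖fA a 0 j‖ ≤ cv ^ 2 * qq j := by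
      intro j
      by_cases hj : j = 0
      · subst hj
        simp only [fA, ne_eq, not_true_eq_false, false_and, if_false, norm_zero]
        unfold qq; norm_num
      · unfold fA
        rw [if_pos ⟨by omega, by omega⟩]
        rw [norm_div, norm_mul, Complex.norm_intCast]
        have h0 : (0 - 0 : ℤ) ^ 2 = 0 := by norm_num
        have hden : |((0 ^ 2 - j ^ 2 : ℤ) : ℝ)| = (j : ℝ) ^ 2 := by
          push_cast; rw [zero_sub, abs_neg, abs_of_nonneg (by positivity)]
        rw [hden]
        have hup : ‖a (0 - j)‖ * ‖a (j - 0)‖ ≤ cv ^ 2 := by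
          have e : (0 - j : ℤ) = -(j - 0) := by ring
          rw [e]
          have h1 := prod_norm_le hcv hbd (j - 0)
          have h2 : uu (j - 0) ≤ 1 := by
            unfold uu
            rw [div_le_one (by positivity)]
            nlinarith [abs_nonneg ((j - 0 : ℤ) : ℝ)]
          nlinarith [mul_nonneg (norm_nonneg (a (-(j-0)))) (norm_nonneg (a (j-0))), sq_nonneg cv]
        have hjpos : (0:ℝ) < (j : ℝ) ^ 2 := by
          have : ((j:ℝ)) ≠ 0 := Int.cast_ne_zero.mpr hj
          positivity
        rw [div_le_iff₀ hjpos]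
        unfold qq
        calc ‖a (0 - j)‖ * ‖a (j - 0)‖ ≤ cv ^ 2 := hup
          _ = cv ^ 2 * (1 / (j:ℝ)^2) * (j:ℝ)^2 := by field_simp
    have hq : Summable fun j : ℤ => cv ^ 2 * qq j := qq_summable.mul_left _
    calc ‖∑' j : ℤ, fA a 0 j‖ ≤ ∑' j : ℤ, ‖fA a 0 j‖ := norm_tsum_le_tsum_norm hfns
      _ ≤ ∑' j : ℤ, cv ^ 2 * qq j := Summable.tsum_le_tsum hptw hfns hq
      _ = cv ^ 2 * ∑' j : ℤ, qq j := tsum_mul_left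
      _ ≤ cv ^ 2 * 6 := by
          apply mul_le_mul_of_nonneg_left qq_tsum_le (by positivity)
      _ ≤ cv ^ 2 * 100 / br 0 ^ 2 := by
          have : br 0 = 1 := by unfold br; norm_num
          rw [this]; nlinarith [sq_nonneg cv]
  · -- k₀ ≠ 0
    have hKne : ((k₀ : ℝ)) ≠ 0 := Int.cast_ne_zero.mpr hk
    have hK : (0 : ℝ) < (k₀ : ℝ) ^ 2 := by positivity
    have hs1 : Summable fun l : ℤ => fA a k₀ (k₀ + l) := by
      have := (Equiv.addLeft k₀).summable_iff (f := fA a k₀)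
      simp only [Function.comp, Equiv.coe_addLeft] at this
      exact this.mpr hfs
    have hs2 : Summable fun l : ℤ => fA a k₀ (k₀ - l) := by
      have := (Equiv.subLeft k₀).summable_iff (f := fA a k₀)
      simp only [Function.comp_def, Equiv.subLeft_apply] at this
      exact this.mpr hfs
    have h2S : ∑' l : ℤ, (fA a k₀ (k₀ + l) + fA a k₀ (k₀ - l)) = 2 * ∑' j : ℤ, fA a k₀ j := by
      rw [Summable.tsum_add hs1 hs2]
      have e1 := (Equiv.addLeft k₀).tsum_eq (fA a k₀)
      have e2 := (Equiv.subLeft k₀).tsum_eq (fA a k₀)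
      simp only [Equiv.coe_addLeft] at e1
      simp only [Equiv.subLeft_apply] at e2
      rw [e1, e2]
      ring
    set b : ℤ → ℝ := fun l => cv ^ 2 / (k₀ : ℝ) ^ 2 * (3 * uu l + qq (l - 2 * k₀) + qq (l + 2 * k₀))
      with hbdef
    have hq1s : Summable fun l : ℤ => qq (l - 2 * k₀) := by
      have := (Equiv.subRight (2 * k₀)).summable_iff (f := qq)
      simp only [Function.comp_def, Equiv.subRight_apply] at this
      exact this.mpr qq_summable
    have hq2s : Summable fun l : ℤ => qq (l + 2 * k₀) := by
      have := (Equiv.addRight (2 * k₀)).summable_iff (f := qq)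
      simp only [Function.comp, Equiv.coe_addRight] at this
      exact this.mpr qq_summable
    have hbs : Summable b := by
      apply Summable.mul_left
      exact ((uu_summable.mul_left 3).add hq1s).add hq2s
    have hgs : Summable fun l : ℤ => ‖fA a k₀ (k₀ + l) + fA a k₀ (k₀ - l)‖ := by
      refine Summable.of_norm_bounded hbs fun l => ?_
      rw [norm_norm]; exact pair_bound hcv hk hbd l
    have hbsum : ∑' l : ℤ, b l ≤ cv ^ 2 / (k₀ : ℝ) ^ 2 * 33 := by
      rw [hbdef]
      rw [tsum_mul_left]
      apply mul_le_mul_of_nonneg_left _ (by positivity)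
      have e1 := (Equiv.subRight (2 * k₀)).tsum_eq qq
      have e2 := (Equiv.addRight (2 * k₀)).tsum_eq qq
      simp only [Equiv.subRight_apply] at e1
      simp only [Equiv.coe_addRight] at e2
      rw [Summable.tsum_add ((uu_summable.mul_left 3).add hq1s) hq2s,
        Summable.tsum_add (uu_summable.mul_left 3) hq1s, tsum_mul_left, e1, e2]
      have h1 := uu_tsum_le
      have h2 := qq_tsum_le
      linarith
    have hnorm2 : 2 * ‖∑' j : ℤ, fA a k₀ j‖ ≤ cv ^ 2 / (k₀ : ℝ) ^ 2 * 33 := by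
      have : ‖∑' l : ℤ, (fA a k₀ (k₀ + l) + fA a k₀ (k₀ - l))‖
          = 2 * ‖∑' j : ℤ, fA a k₀ j‖ := by
        rw [h2S, norm_mul]
        norm_num
      rw [← this]
      calc ‖∑' l : ℤ, (fA a k₀ (k₀ + l) + fA a k₀ (k₀ - l))‖
          ≤ ∑' l : ℤ, ‖fA a k₀ (k₀ + l) + fA a k₀ (k₀ - l)‖ :=
            norm_tsum_le_tsum_norm hgs
        _ ≤ ∑' l : ℤ, b l := Summable.tsum_le_tsum (fun l => pair_bound hcv hk hbd l) hgs hbs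
        _ ≤ cv ^ 2 / (k₀ : ℝ) ^ 2 * 33 := hbsum
    have hbr2 : br k₀ ^ 2 ≤ 4 * (k₀ : ℝ) ^ 2 := by
      unfold br
      have h1 : (1:ℝ) ≤ |(k₀ : ℝ)| := by
        have := Int.one_le_abs hk
        calc (1:ℝ) = ((1:ℤ):ℝ) := by norm_num
          _ ≤ (|k₀| : ℝ) := by exact_mod_cast this
          _ = |(k₀ : ℝ)| := by rw [← Int.cast_abs]
      nlinarith [sq_abs (k₀ : ℝ)]
    have hbrpos := br_pos k₀
    have hS := norm_nonneg (∑' j : ℤ, fA a k₀ j)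
    have h' : 2 * ‖∑' j : ℤ, fA a k₀ j‖ * (k₀ : ℝ) ^ 2 ≤ 33 * cv ^ 2 := by
      have h2 := mul_le_mul_of_nonneg_right hnorm2 hK.le
      calc 2 * ‖∑' j : ℤ, fA a k₀ j‖ * (k₀ : ℝ) ^ 2
          = (2 * ‖∑' j : ℤ, fA a k₀ j‖) * (k₀ : ℝ) ^ 2 := by ring
        _ ≤ (cv ^ 2 / (k₀ : ℝ) ^ 2 * 33) * (k₀ : ℝ) ^ 2 := h2
        _ = 33 * cv ^ 2 := by field_simp
    rw [le_div_iff₀ (by positivity : (0:ℝ) < br k₀ ^ 2)]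
    nlinarith [mul_le_mul_of_nonneg_left hbr2 hS, sq_nonneg cv]

theorem A1_bound :
    ∃ c₀ : ℝ, 0 < c₀ ∧
      ∀ (h cv α β t₀ : ℝ), 0 < h → 0 < cv → 1 < α → 0 ≤ β → 0 < t₀ →
      ∀ v : ℤ → ℝ → ℂ, (∀ m, Continuous (v m)) → (∀ t, v 0 t = 0) →
        (∀ m t, ‖v m t‖ ≤ cv * Real.exp (-β * |(m : ℝ)|) / br m ^ α) →
      ∀ (k₀ : ℤ) (t : ℝ), |t| ≤ t₀ →
        ‖∫ τ in (0 : ℝ)..t,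
            ∑' j : ℤ, if j ≠ k₀ ∧ j ≠ -k₀ then
                v (k₀ - j) τ * v (j - k₀) τ / ((k₀ ^ 2 - j ^ 2 : ℤ) : ℂ)
              else 0‖
          ≤ |t| * cv ^ 2 * c₀ / br k₀ ^ 2 := by
  refine ⟨100, by norm_num, ?_⟩
  intro h cv α β t₀ hh hcv hα hβ ht₀ v hcont hv0 hvbd k₀ t ht
  have hbd : ∀ τ : ℝ, ∀ m : ℤ, ‖v m τ‖ ≤ cv / br m := by
    intro τ m
    have h1 := hvbd m τ
    have hbr1 := one_le_br m
    have hbrpos := br_pos m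
    have hexp : Real.exp (-β * |(m : ℝ)|) ≤ 1 := by
      rw [← Real.exp_zero]
      apply Real.exp_le_exp.mpr
      have : 0 ≤ β * |(m : ℝ)| := mul_nonneg hβ (abs_nonneg _)
      linarith
    have hpow : br m ≤ br m ^ α := by
      nth_rewrite 1 [← Real.rpow_one (br m)]
      exact Real.rpow_le_rpow_of_exponent_le hbr1 hα.le
    have h2 : cv * Real.exp (-β * |(m : ℝ)|) / br m ^ α ≤ cv / br m := by
      apply div_le_div₀ hcv.le _ hbrpos hpow
      nlinarith [Real.exp_pos (-β * |(m : ℝ)|)]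
    linarith
  have hC : ∀ τ ∈ Set.uIoc (0 : ℝ) t,
      ‖∑' j : ℤ, if j ≠ k₀ ∧ j ≠ -k₀ then
          v (k₀ - j) τ * v (j - k₀) τ / ((k₀ ^ 2 - j ^ 2 : ℤ) : ℂ)
        else 0‖ ≤ cv ^ 2 * 100 / br k₀ ^ 2 := by
    intro τ _
    exact key hcv.le k₀ (a := fun m => v m τ) (hbd τ)
  have hmain := intervalIntegral.norm_integral_le_of_norm_le_const hC
  rw [sub_zero] at hmain
  calc _ ≤ cv ^ 2 * 100 / br k₀ ^ 2 * |t| := hmain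
    _ = |t| * cv ^ 2 * 100 / br k₀ ^ 2 := by ring
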